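/- For every instance of the rule (■_R^1) of LNS_Kt, i.e., with conclusion G ⇗ Γ ⇒ Δ ↗ Σ ⇒ Π,■A and premisses G ⇗ Γ ⇒ Δ,A ↗ Σ ⇒ Π,■A and G ⇗ Γ ⇒ Δ ↗ Σ ⇒ Π,■A ↙ ε ⇒ A (where G is a possibly empty context, ⇗ stands for either ↗ or ↙, and ε is the empty multiset): if the conclusion is falsifiable, then at least one of the two premisses is falsifiable. -/

import Mathlib

/-- Formulae of tense logic: atoms (indexed by naturals), ⊥, →, □, ◇, ■, ◆. -/
inductive Formula : Type
  | atom : ℕ → Formula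
  | bot : Formula
  | imp : Formula → Formula → Formula
  | box : Formula → Formula
  | dia : Formula → Formula
  | bbox : Formula → Formula
  | bdia : Formula → Formula

def Formula.neg (A : Formula) : Formula := A.imp .bot
def Formula.and (A B : Formula) : Formula := (A.imp B.neg).neg
def Formula.or (A B : Formula) : Formula := A.neg.imp B
def Formula.top : Formula := Formula.bot.imp .bot

/-- Formulas built from atoms, ⊥, →, □, ■ only (no diamonds). -/
def Formula.NoDia : Formula → Prop
  | .atom _ => True
  | .bot => True
  | .imp A B => A.NoDia ∧ B.NoDia
  | .box A => A.NoDia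
  | .dia _ => False
  | .bbox A => A.NoDia
  | .bdia _ => False

/-- Structural connectives: `up` is ↗ and `dn` is ↙. -/
inductive Dir : Type
  | up
  | dn

/-- Linear nested sequents: a nonempty list of components `Γ ⇒ Δ`
joined by the structural connectives ↗ (`up`) and ↙ (`dn`). -/
inductive LNS : Type
  | single (Γ Δ : Multiset Formula) : LNS
  | up (Γ Δ : Multiset Formula) (S : LNS) : LNS
  | dn (Γ Δ : Multiset Formula) (S : LNS) : LNS

/-- A (possibly empty) context: a list of components, each together with the
structural connective joining it to what follows. -/
abbrev Ctx := List (Multiset Formula × Multiset Formula × Dir)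

/-- `plug G S` is the linear nested sequent `G ⇗ S` (just `S` when `G` is empty). -/
def plug : Ctx → LNS → LNS
  | [], S => S
  | (Γ, Δ, Dir.up) :: G, S => LNS.up Γ Δ (plug G S)
  | (Γ, Δ, Dir.dn) :: G, S => LNS.dn Γ Δ (plug G S)

/-- The structural connective joining the context to what follows it (none if empty). -/
def lastDir : Ctx → Option Dir
  | [] => none
  | [(_, _, d)] => some d
  | _ :: G => lastDir G

/-- Kripke forcing for tense logic. -/
def Force {W : Type} (R : W → W → Prop) (V : W → ℕ → Prop) : W → Formula → Prop
  | w, .atom p => V w p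
  | _, .bot => False
  | w, .imp A B => Force R V w A → Force R V w B
  | w, .box A => ∀ v, R w v → Force R V v A
  | w, .dia A => ∃ v, R w v ∧ Force R V v A
  | w, .bbox A => ∀ v, R v w → Force R V v A
  | w, .bdia A => ∃ v, R v w ∧ Force R V v A

/-- Conjunction of a finite multiset of formulae (empty conjunction is ⊤). -/
noncomputable def bigAnd (Γ : Multiset Formula) : Formula :=
  Γ.toList.foldr Formula.and Formula.top

/-- Disjunction of a finite multiset of formulae (empty disjunction is ⊥). -/
noncomputable def bigOr (Δ : Multiset Formula) : Formula :=
  Δ.toList.foldr Formula.or Formula.bot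

/-- The formula translation τ of a linear nested sequent. -/
noncomputable def tau : LNS → Formula
  | .single Γ Δ => (bigAnd Γ).imp (bigOr Δ)
  | .up Γ Δ S => (bigAnd Γ).imp ((bigOr Δ).or (tau S).box)
  | .dn Γ Δ S => (bigAnd Γ).imp ((bigOr Δ).or (tau S).bbox)

/-- A formula is valid if it is forced at every world of every Kripke model. -/
def Valid (A : Formula) : Prop :=
  ∀ (W : Type) (_ : Nonempty W) (R : W → W → Prop) (V : W → ℕ → Prop) (w : W),
    Force R V w A

/-- A linear nested sequent is falsifiable if its formula translation fails at
some world of some Kripke model. -/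
def Falsifiable (S : LNS) : Prop :=
  ∃ (W : Type) (_ : Nonempty W) (R : W → W → Prop) (V : W → ℕ → Prop) (w : W),
    ¬ Force R V w (tau S)

lemma force_or {W : Type} (R : W → W → Prop) (V : W → ℕ → Prop) (w : W) (X Y : Formula) :
    Force R V w (X.or Y) ↔ (Force R V w X ∨ Force R V w Y) := by
  simp only [Formula.or, Formula.neg, Force]
  tauto

lemma force_bigOr_list {W : Type} (R : W → W → Prop) (V : W → ℕ → Prop) (w : W)
    (L : List Formula) :
    Force R V w (L.foldr Formula.or Formula.bot) ↔ ∃ B ∈ L, Force R V w B := by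
  induction L with
  | nil => simp [Force]
  | cons B L ih =>
    simp only [List.foldr_cons, force_or, ih, List.mem_cons]
    constructor
    · rintro (h | ⟨C, hC, h⟩)
      · exact ⟨B, Or.inl rfl, h⟩
      · exact ⟨C, Or.inr hC, h⟩
    · rintro ⟨C, (rfl | hC), h⟩
      · exact Or.inl h
      · exact Or.inr ⟨C, hC, h⟩

lemma force_bigOr {W : Type} (R : W → W → Prop) (V : W → ℕ → Prop) (w : W)
    (Δ : Multiset Formula) :
    Force R V w (bigOr Δ) ↔ ∃ B ∈ Δ, Force R V w B := by
  rw [bigOr, force_bigOr_list]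
  simp

lemma mono_plug {W : Type} (R : W → W → Prop) (V : W → ℕ → Prop) (S T : LNS)
    (hst : ∀ w, Force R V w (tau S) → Force R V w (tau T)) :
    ∀ (G : Ctx) (w : W), Force R V w (tau (plug G S)) → Force R V w (tau (plug G T)) := by
  intro G
  induction G with
  | nil => exact hst
  | cons c G ih =>
    obtain ⟨Γ, Δ, d⟩ := c
    cases d <;>
    · intro w h
      simp only [plug, tau, Force, force_or] at h ⊢
      intro hΓ
      exact (h hΓ).imp_right fun hh v hv => ih v (hh v hv)

lemma core_step {W : Type} (R : W → W → Prop) (V : W → ℕ → Prop)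
    (Θ Λ : Multiset Formula) (A : Formula) (w : W)
    (h : Force R V w (tau (.dn Θ (A.bbox ::ₘ Λ) (.single 0 {A})))) :
    Force R V w (tau (.single Θ (A.bbox ::ₘ Λ))) := by
  simp only [tau, Force, force_or] at h ⊢
  intro hΘ
  by_cases hΛ : Force R V w (bigOr (A.bbox ::ₘ Λ))
  · exact hΛ
  exfalso
  apply hΛ
  have h2 := (h hΘ).resolve_left hΛ
  rw [force_bigOr]
  refine ⟨A.bbox, Multiset.mem_cons_self _ _, ?_⟩
  intro u hu
  have htop : Force R V u (bigAnd (0 : Multiset Formula)) := by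
    simp [bigAnd, Force, Formula.top]
  have := (force_bigOr R V u {A}).mp (h2 u hu htop)
  simpa using this

/-- Soundness of the rule (■_R^1): if the conclusion
`G ⇗ Γ ⇒ Δ ↗ Θ ⇒ Λ,■A` is falsifiable, then one of the premisses
`G ⇗ Γ ⇒ Δ,A ↗ Θ ⇒ Λ,■A` and `G ⇗ Γ ⇒ Δ ↗ Θ ⇒ Λ,■A ↙ ε ⇒ A` is falsifiable. -/
theorem bboxR1_sound (G : Ctx) (Γ Δ Θ Λ : Multiset Formula) (A : Formula)
    (h : Falsifiable (plug G (.up Γ Δ (.single Θ (A.bbox ::ₘ Λ))))) :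
    Falsifiable (plug G (.up Γ (A ::ₘ Δ) (.single Θ (A.bbox ::ₘ Λ)))) ∨
      Falsifiable (plug G (.up Γ Δ (.dn Θ (A.bbox ::ₘ Λ) (.single 0 {A})))) := by
  obtain ⟨W, ne, R, V, w, hw⟩ := h
  right
  refine ⟨W, ne, R, V, w, fun hc => hw ?_⟩
  refine mono_plug R V _ _ ?_ G w hc
  intro v hv
  simp only [tau, Force, force_or] at hv ⊢
  intro hΓ
  exact (hv hΓ).imp_right fun hh u hu =>
    core_step R V Θ Λ A u (by simp only [tau, Force, force_or]; exact hh u hu)
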